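/- arXiv:1710.04016 — 6 statements merged into one kernel-verified Lean document; each statement's English description precedes it below -/
import Mathlib

section
/- Let ε > 0 and let s be a complex number with Re(s) > 0. Then 1 + ε s² ≠ 0, the complex number s²/(1 + ε s²) is not a nonpositive real number (i.e. it does not lie in (−∞, 0]), and the principal square root λ₊ = √(s²/(1 + ε s²)) satisfies Re(λ₊) > 0. -/
open Complex

lemma sq_not_nonpos_real (s : ℂ) (hs : 0 < s.re) (x : ℝ) (hx : x ≤ 0) :
    (x : ℂ) ≠ s ^ 2 := by
  intro h
  have him : (s ^ 2).im = 0 := by rw [← h]; simp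
  have hre : (s ^ 2).re = x := by rw [← h]; simp
  rw [sq, Complex.mul_im] at him
  rw [sq, Complex.mul_re] at hre
  have h0 : s.re * s.im = 0 := by linarith
  rcases mul_eq_zero.1 h0 with h'|h'
  · linarith
  · nlinarith

/-- For `ε > 0` and `Re(s) > 0`: `1 + ε s² ≠ 0`, `s²/(1 + ε s²)` is not a nonpositive
real number, and the principal square root `λ₊ = √(s²/(1 + ε s²))` has `Re(λ₊) > 0`. -/
theorem stmt_5 (ε : ℝ) (hε : 0 < ε) (s : ℂ) (hs : 0 < s.re) :
    1 + (ε : ℂ) * s ^ 2 ≠ 0 ∧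
    (¬ ∃ x : ℝ, x ≤ 0 ∧ (x : ℂ) = s ^ 2 / (1 + (ε : ℂ) * s ^ 2)) ∧
    0 < ((s ^ 2 / (1 + (ε : ℂ) * s ^ 2)) ^ (1 / 2 : ℂ)).re := by
  have h1 : 1 + (ε : ℂ) * s ^ 2 ≠ 0 := by
    intro h
    have hεne : (ε : ℂ) ≠ 0 := by exact_mod_cast hε.ne'
    have hsq : ((-(1/ε) : ℝ) : ℂ) = s ^ 2 := by
      push_cast
      field_simp
      linear_combination -h
    exact sq_not_nonpos_real s hs _ (by simp; positivity) hsq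
  have h2 : ¬ ∃ x : ℝ, x ≤ 0 ∧ (x : ℂ) = s ^ 2 / (1 + (ε : ℂ) * s ^ 2) := by
    rintro ⟨x, hx, hxe⟩
    have hd : (1 : ℝ) - ε * x ≠ 0 := by nlinarith
    have hdc : ((1 - ε * x : ℝ) : ℂ) ≠ 0 := by exact_mod_cast hd
    have key : ((x / (1 - ε * x) : ℝ) : ℂ) = s ^ 2 := by
      have h' : (x : ℂ) * (1 + (ε : ℂ) * s ^ 2) = s ^ 2 := by
        rw [hxe, div_mul_cancel₀ _ h1]
      have hdc' : (1 : ℂ) - (ε : ℂ) * (x : ℂ) ≠ 0 := by push_cast at hdc; exact hdc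
      push_cast
      rw [div_eq_iff hdc']
      linear_combination h'
    refine sq_not_nonpos_real s hs _ ?_ key
    apply div_nonpos_of_nonpos_of_nonneg hx
    nlinarith
  refine ⟨h1, h2, ?_⟩
  set w : ℂ := s ^ 2 / (1 + (ε : ℂ) * s ^ 2) with hw
  have hs0 : s ≠ 0 := fun h => by simp [h] at hs
  have hw0 : w ≠ 0 := div_ne_zero (pow_ne_zero _ hs0) h1
  rw [cpow_def_of_ne_zero hw0, Complex.exp_re]
  have hre : (Complex.log w * (1/2)).re = Real.log ‖w‖ / 2 := by
    simp [Complex.mul_re, Complex.log_re, Complex.log_im]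
    ring
  have him : (Complex.log w * (1/2)).im = Complex.arg w / 2 := by
    simp [Complex.mul_im, Complex.log_re, Complex.log_im]
    ring
  rw [hre, him]
  have hargπ : Complex.arg w ≠ Real.pi := by
    intro h
    rw [Complex.arg_eq_pi_iff] at h
    exact h2 ⟨w.re, h.1.le, by rw [hw] at h ⊢; exact (Complex.ext rfl h.2.symm)⟩
  have h3 : Complex.arg w < Real.pi := lt_of_le_of_ne (Complex.arg_le_pi w) hargπ
  have h4 : -Real.pi < Complex.arg w := Complex.neg_pi_lt_arg w
  have hcos : 0 < Real.cos (Complex.arg w / 2) := by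
    apply Real.cos_pos_of_mem_Ioo
    constructor <;> [linarith; linarith]
  positivity
end

section
/- Let ε > 0, let s be a complex number with Re(s) > 0, and set λ₊ = √(s²/(1 + ε s²)) (principal square root). Let x_r ∈ ℝ and suppose W : [x_r, ∞) → ℂ is twice continuously differentiable, bounded, and satisfies on [x_r, ∞) the equation s²(W − ε W'') − W'' = 0. Then W'(x_r) = −λ₊ · W(x_r). -/
open Set Complex

private lemma sq_pos_re_aux {z : ℂ} (hz : 0 < z.re) (him : (z ^ 2).im = 0) :
    0 < (z ^ 2).re := by
  have h2 : (z ^ 2).im = 2 * z.re * z.im := by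
    rw [sq, Complex.mul_im]; ring
  have h3 : (z ^ 2).re = z.re ^ 2 - z.im ^ 2 := by
    rw [sq, Complex.mul_re]; ring
  have hb : z.im = 0 := by
    rw [h2] at him; nlinarith
  rw [h3, hb]; nlinarith

/-- Solutions of `f' = c f` on `[a, ∞)` are exponentials. -/
private lemma ode_exp_aux {c : ℂ} {f : ℝ → ℂ} {a : ℝ}
    (hf : ∀ x ∈ Set.Ici a, HasDerivWithinAt f (c * f x) (Set.Ici a) x) :
    ∀ x ∈ Set.Ici a, f x = f a * Complex.exp (c * ((x : ℂ) - (a : ℂ))) := by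
  set g : ℝ → ℂ := fun x => f x * Complex.exp (-c * (x : ℂ)) with hg
  have hexp : ∀ x : ℝ, HasDerivAt (fun y : ℝ => Complex.exp (-c * (y : ℂ)))
      (Complex.exp (-c * (x : ℂ)) * (-c)) x := by
    intro x
    have h1 : HasDerivAt (fun y : ℝ => ((y : ℂ))) 1 x := by
      simpa using (hasDerivAt_id x).ofReal_comp
    have h2 : HasDerivAt (fun y : ℝ => -c * (y : ℂ)) (-c) x := by
      simpa using h1.const_mul (-c)
    simpa using h2.cexp
  have hgd : ∀ x ∈ Set.Ici a, HasDerivWithinAt g 0 (Set.Ici a) x := by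
    intro x hx
    have := (hf x hx).mul ((hexp x).hasDerivWithinAt)
    refine this.congr_deriv ?_
    ring
  have key : ∀ x ∈ Set.Ici a, g x = g a := by
    intro x hx
    have hcont : ContinuousOn g (Set.Icc a x) := by
      intro y hy
      exact ((hgd y (Set.mem_Ici.2 hy.1)).continuousWithinAt).mono Set.Icc_subset_Ici_self
    have hderiv : ∀ y ∈ Set.Ico a x, HasDerivWithinAt g 0 (Set.Ici y) y := by
      intro y hy
      exact (hgd y (Set.mem_Ici.2 hy.1)).mono (Set.Ici_subset_Ici.2 hy.1)
    exact constant_of_has_deriv_right_zero hcont hderiv x ⟨Set.mem_Ici.1 hx, le_refl _⟩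
  intro x hx
  have h : f x * Complex.exp (-c * (x : ℂ)) = f a * Complex.exp (-c * (a : ℂ)) := key x hx
  have e1 : Complex.exp (-c * (x : ℂ)) * Complex.exp (c * (x : ℂ)) = 1 := by
    rw [← Complex.exp_add, show -c * (x : ℂ) + c * (x : ℂ) = 0 by ring, Complex.exp_zero]
  calc f x = f x * (Complex.exp (-c * (x : ℂ)) * Complex.exp (c * (x : ℂ))) := by
        rw [e1, mul_one]
    _ = f a * Complex.exp (-c * (a : ℂ)) * Complex.exp (c * (x : ℂ)) := by
        rw [← mul_assoc, h]
    _ = f a * Complex.exp (c * ((x : ℂ) - (a : ℂ))) := by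
        rw [mul_assoc, ← Complex.exp_add,
          show -c * (a : ℂ) + c * (x : ℂ) = c * ((x : ℂ) - (a : ℂ)) by ring]

/-- Half-line characterization of bounded solutions of the Laplace-transformed
linearized Boussinesq equation `s²(W − ε W'') − W'' = 0` on `[x_r, ∞)`: any such
bounded solution satisfies `W'(x_r) = −λ₊ W(x_r)` with `λ₊ = √(s²/(1 + ε s²))`
(principal square root). -/
theorem stmt_7 (ε : ℝ) (hε : 0 < ε) (s : ℂ) (hs : 0 < s.re) (xr : ℝ)
    (W : ℝ → ℂ)
    (hW : ContDiffOn ℝ 2 W (Set.Ici xr))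
    (hWbd : ∃ M : ℝ, ∀ x ∈ Set.Ici xr, ‖W x‖ ≤ M)
    (heq : ∀ x ∈ Set.Ici xr,
      s ^ 2 * (W x - (ε : ℂ) * derivWithin (derivWithin W (Set.Ici xr)) (Set.Ici xr) x)
        - derivWithin (derivWithin W (Set.Ici xr)) (Set.Ici xr) x = 0) :
    derivWithin W (Set.Ici xr) xr
      = -((s ^ 2 / (1 + (ε : ℂ) * s ^ 2)) ^ (1 / 2 : ℂ)) * W xr := by
  obtain ⟨M, hM⟩ := hWbd
  have hM0 : 0 ≤ M := le_trans (norm_nonneg _) (hM xr Set.self_mem_Ici)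
  have hs0 : s ≠ 0 := fun h => by simp [h] at hs
  have hs2 : s ^ 2 ≠ 0 := pow_ne_zero _ hs0
  -- the denominator does not vanish
  have hden : (1 + (ε : ℂ) * s ^ 2) ≠ 0 := by
    intro h
    have him : (s ^ 2).im = 0 := by
      have := congrArg Complex.im h
      simp [Complex.add_im, Complex.mul_im] at this
      rcases this with h' | h'
      · exact absurd h' (ne_of_gt hε)
      · exact h'
    have hre := congrArg Complex.re h
    simp [Complex.add_re, Complex.mul_re, him] at hre
    have := sq_pos_re_aux hs him
    nlinarith
  set μ : ℂ := s ^ 2 / (1 + (ε : ℂ) * s ^ 2) with hμdef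
  have hμ0 : μ ≠ 0 := div_ne_zero hs2 hden
  -- μ is not a nonpositive real number
  have hμ_not : ¬((μ.im = 0) ∧ μ.re ≤ 0) := by
    rintro ⟨h1, h2⟩
    have hμre : μ.re < 0 := by
      rcases lt_or_eq_of_le h2 with h | h
      · exact h
      · exact absurd (Complex.ext (by simp [← h]) (by simp [h1])) hμ0
    have hμc : μ = ((μ.re : ℝ) : ℂ) := (Complex.ext (by simp) (by simp [h1]))
    have hsq : s ^ 2 = μ * (1 + (ε : ℂ) * s ^ 2) := by
      rw [hμdef, div_mul_cancel₀ _ hden]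
    set c : ℝ := μ.re with hc
    have hd : (1 : ℝ) - c * ε > 0 := by nlinarith
    have hd0 : (((1 - c * ε : ℝ)) : ℂ) ≠ 0 := by
      exact_mod_cast ne_of_gt hd
    have hs2eq : s ^ 2 = ((c / (1 - c * ε) : ℝ) : ℂ) := by
      have h3 : s ^ 2 * (((1 - c * ε : ℝ)) : ℂ) = (c : ℂ) := by
        rw [hμc] at hsq
        push_cast at hsq ⊢
        linear_combination hsq
      rw [Complex.ofReal_div, eq_div_iff hd0]
      exact h3
    have him2 : (s ^ 2).im = 0 := by rw [hs2eq, Complex.ofReal_im]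
    have hre2 := sq_pos_re_aux hs him2
    rw [hs2eq, Complex.ofReal_re] at hre2
    have : c / (1 - c * ε) < 0 := div_neg_of_neg_of_pos hμre hd
    linarith
  set lam : ℂ := μ ^ (1 / 2 : ℂ) with hlamdef
  have hlam_sq : lam ^ 2 = μ := by
    rw [hlamdef, sq, ← Complex.cpow_add _ _ hμ0]
    norm_num
  -- positivity of the real part of lam
  have hlam_re : 0 < lam.re := by
    have hge : 0 ≤ lam.re := by
      rw [hlamdef, Complex.cpow_def_of_ne_zero hμ0, Complex.exp_re]
      apply mul_nonneg (le_of_lt (Real.exp_pos _))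
      have him : (Complex.log μ * (1 / 2)).im = μ.arg / 2 := by
        simp [Complex.mul_im, Complex.log_im]
        ring
      rw [him]
      apply Real.cos_nonneg_of_mem_Icc
      constructor
      · linarith [Complex.neg_pi_lt_arg μ, Real.pi_pos]
      · linarith [Complex.arg_le_pi μ]
    rcases lt_or_eq_of_le hge with h | h
    · exact h
    · exfalso
      apply hμ_not
      rw [← hlam_sq]
      constructor
      · rw [sq, Complex.mul_im, ← h]; ring
      · rw [sq, Complex.mul_re, ← h]; nlinarith [sq_nonneg lam.im]
  -- derivative setup
  set W1 : ℝ → ℂ := derivWithin W (Set.Ici xr) with hW1def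
  set W2 : ℝ → ℂ := derivWithin W1 (Set.Ici xr) with hW2def
  have hUD : UniqueDiffOn ℝ (Set.Ici xr) := uniqueDiffOn_Ici xr
  have hdW : DifferentiableOn ℝ W (Set.Ici xr) := hW.differentiableOn (by norm_num)
  have hW1c : ContDiffOn ℝ 1 W1 (Set.Ici xr) := hW.derivWithin hUD (by norm_num)
  have hdW1 : DifferentiableOn ℝ W1 (Set.Ici xr) := hW1c.differentiableOn (by norm_num)
  have hWd : ∀ x ∈ Set.Ici xr, HasDerivWithinAt W (W1 x) (Set.Ici xr) x :=
    fun x hx => (hdW x hx).hasDerivWithinAt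
  have hW1d : ∀ x ∈ Set.Ici xr, HasDerivWithinAt W1 (W2 x) (Set.Ici xr) x :=
    fun x hx => (hdW1 x hx).hasDerivWithinAt
  -- second-order equation
  have heq2 : ∀ x ∈ Set.Ici xr, W2 x = lam ^ 2 * W x := by
    intro x hx
    have h := heq x hx
    rw [hlam_sq, hμdef, div_mul_eq_mul_div, eq_div_iff hden]
    linear_combination -h
  -- first-order factorizations
  have hud : ∀ x ∈ Set.Ici xr,
      HasDerivWithinAt (fun y => W1 y + lam * W y) (lam * (W1 x + lam * W x))
        (Set.Ici xr) x := by
    intro x hx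
    have h := (hW1d x hx).add ((hWd x hx).const_mul lam)
    refine h.congr_deriv ?_
    rw [heq2 x hx]; ring
  have hvd : ∀ x ∈ Set.Ici xr,
      HasDerivWithinAt (fun y => W1 y - lam * W y) (-lam * (W1 x - lam * W x))
        (Set.Ici xr) x := by
    intro x hx
    have h := (hW1d x hx).sub ((hWd x hx).const_mul lam)
    refine h.congr_deriv ?_
    rw [heq2 x hx]; ring
  have hu := ode_exp_aux hud
  have hv := ode_exp_aux hvd
  -- boundedness forces the growing mode to vanish
  have hbound : ∀ t : ℝ, 0 ≤ t →
      ‖W1 xr + lam * W xr‖ * Real.exp (lam.re * t)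
        ≤ 2 * ‖lam‖ * M + ‖W1 xr - lam * W xr‖ := by
    intro t ht
    have hx : xr + t ∈ Set.Ici xr := by simp [Set.mem_Ici]; linarith
    have e1 := hu (xr + t) hx
    have e2 := hv (xr + t) hx
    have hts : ((xr + t : ℝ) : ℂ) - (xr : ℂ) = (t : ℂ) := by push_cast; ring
    rw [hts] at e1 e2
    have hkey : (W1 xr + lam * W xr) * Complex.exp (lam * (t : ℂ))
        = 2 * lam * W (xr + t)
          + (W1 xr - lam * W xr) * Complex.exp (-lam * (t : ℂ)) := by
      linear_combination e2 - e1
    have hre1 : (lam * (t : ℂ)).re = lam.re * t := by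
      simp [Complex.mul_re]
    have hre2 : (-lam * (t : ℂ)).re = -(lam.re * t) := by
      simp [Complex.mul_re]
    calc ‖W1 xr + lam * W xr‖ * Real.exp (lam.re * t)
        = ‖(W1 xr + lam * W xr) * Complex.exp (lam * (t : ℂ))‖ := by
          rw [norm_mul, Complex.norm_exp, hre1]
      _ = ‖2 * lam * W (xr + t)
          + (W1 xr - lam * W xr) * Complex.exp (-lam * (t : ℂ))‖ := by rw [hkey]
      _ ≤ ‖2 * lam * W (xr + t)‖
          + ‖(W1 xr - lam * W xr) * Complex.exp (-lam * (t : ℂ))‖ := norm_add_le _ _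
      _ ≤ 2 * ‖lam‖ * M + ‖W1 xr - lam * W xr‖ := by
          apply add_le_add
          · rw [norm_mul, norm_mul]
            simp only [Complex.norm_ofNat]
            have hWb := hM (xr + t) hx
            have h0 : (0:ℝ) ≤ 2 * ‖lam‖ := by positivity
            exact mul_le_mul_of_nonneg_left hWb h0
          · rw [norm_mul, Complex.norm_exp, hre2]
            have h1 : Real.exp (-(lam.re * t)) ≤ 1 := by
              rw [Real.exp_le_one_iff]
              nlinarith
            nlinarith [norm_nonneg (W1 xr - lam * W xr)]
  -- conclude
  have hzero : W1 xr + lam * W xr = 0 := by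
    by_contra hne
    have ha : 0 < ‖W1 xr + lam * W xr‖ := norm_pos_iff.2 hne
    set a : ℝ := ‖W1 xr + lam * W xr‖ with hadef
    set C : ℝ := 2 * ‖lam‖ * M + ‖W1 xr - lam * W xr‖ with hCdef
    have hC0 : 0 < C := by
      have := hbound 0 (le_refl 0)
      simp at this
      nlinarith
    set t : ℝ := C / (a * lam.re) with htdef
    have ht : 0 ≤ t := by positivity
    have hb := hbound t ht
    have hexp := Real.add_one_le_exp (lam.re * t)
    have hat : a * (lam.re * t) = C := by
      rw [htdef]
      field_simp
    nlinarith [mul_le_mul_of_nonneg_left hexp (le_of_lt ha)]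
  linear_combination hzero
end

section
/- Let ε > 0, δx > 0, δt > 0, let z be a complex number with |z| > 1, and set s = s(z) = (2/δt)·(z − 1)/(z + 1). Then the quadratic polynomial P(r) = (1 + ε s²) r² − 2(1 + s²(ε + δx²/2)) r + (1 + ε s²) has no root on the unit circle: there is no r ∈ ℂ with |r| = 1 and P(r) = 0. -/
/-- The Crank–Nicolson symbol `s(z) = (2/δt)·(z-1)/(z+1)`. -/
noncomputable def sCN (δt : ℝ) (z : ℂ) : ℂ := (2 / (δt : ℂ)) * (z - 1) / (z + 1)

/-- For `|z| > 1`, the characteristic polynomial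
`P(r) = (1 + εs²) r² − 2(1 + s²(ε + δx²/2)) r + (1 + εs²)` of the staggered-grid
Crank–Nicolson scheme, with `s = s(z)`, has no root on the unit circle. -/
theorem stmt_8 (ε δx δt : ℝ) (hε : 0 < ε) (hδx : 0 < δx) (hδt : 0 < δt)
    (z : ℂ) (hz : 1 < ‖z‖) :
    ¬ ∃ r : ℂ, ‖r‖ = 1 ∧
      (1 + (ε : ℂ) * (sCN δt z) ^ 2) * r ^ 2
        - 2 * (1 + (sCN δt z) ^ 2 * ((ε : ℂ) + (δx : ℂ) ^ 2 / 2)) * r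
        + (1 + (ε : ℂ) * (sCN δt z) ^ 2) = 0 := by
  rintro ⟨r, hr, heq⟩
  set s := sCN δt z with hs
  -- z + 1 ≠ 0
  have hz1 : z + 1 ≠ 0 := by
    intro h
    have hz' : z = -1 := by linear_combination h
    rw [hz'] at hz
    simp at hz
  -- Re s > 0
  have hsre : 0 < s.re := by
    have h2 : s = ((2 / δt : ℝ) : ℂ) * ((z - 1) / (z + 1)) := by
      rw [hs, sCN]; push_cast; ring
    have hden : 0 < Complex.normSq (z + 1) := Complex.normSq_pos.mpr hz1
    have hnum : 0 < Complex.normSq z - 1 := by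
      rw [← Complex.sq_norm]
      nlinarith [norm_nonneg z]
    have hre : ((z - 1) / (z + 1)).re
        = (Complex.normSq z - 1) / Complex.normSq (z + 1) := by
      rw [Complex.div_re, ← add_div]
      congr 1
      simp [Complex.normSq_apply]
      ring
    rw [h2, Complex.re_ofReal_mul, hre]
    positivity
  -- facts about r
  have hnr : Complex.normSq r = 1 := by
    rw [← Complex.sq_norm, hr]; norm_num
  have hconj : r * (starRingEnd ℂ) r = 1 := by
    rw [Complex.mul_conj, hnr]; norm_num
  set c := r.re with hc
  have hc1 : c ≤ 1 := by
    have := Complex.abs_re_le_norm r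
    rw [hr] at this
    exact (abs_le.mp this).2
  -- derive real relation
  have hsum : r + (starRingEnd ℂ) r = ((2 * c : ℝ) : ℂ) := Complex.add_conj r
  have hB' : (1 + (ε : ℂ) * s ^ 2) * (r + (starRingEnd ℂ) r)
      = 2 * (1 + s ^ 2 * ((ε : ℂ) + (δx : ℂ) ^ 2 / 2)) := by
    linear_combination (starRingEnd ℂ) r * heq
      + (2 * (1 + s ^ 2 * ((ε : ℂ) + (δx : ℂ) ^ 2 / 2))
        - (1 + (ε : ℂ) * s ^ 2) * r) * hconj
  rw [hsum] at hB'
  -- s^2 is a nonpositive real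
  have hk : ε * (c - 1) - δx ^ 2 / 2 < 0 := by nlinarith
  have hkey : s ^ 2 * ((ε * (c - 1) - δx ^ 2 / 2 : ℝ) : ℂ) = ((1 - c : ℝ) : ℂ) := by
    push_cast at hB' ⊢
    linear_combination hB' / 2
  set t : ℝ := (1 - c) / (ε * (c - 1) - δx ^ 2 / 2) with htdef
  have ht : s ^ 2 = (t : ℂ) := by
    rw [htdef]
    push_cast
    rw [eq_div_iff (by simpa using Complex.ofReal_ne_zero.mpr hk.ne)]
    push_cast at hkey
    linear_combination hkey
  have htle : t ≤ 0 := div_nonpos_of_nonneg_of_nonpos (by linarith) hk.le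
  -- contradiction
  have h1 : (s ^ 2).im = 0 := by rw [ht]; simp
  have h2 : (s ^ 2).im = 2 * s.re * s.im := by
    simp [pow_two, Complex.mul_im]; ring
  have him : s.im = 0 := by
    have h3 : s.re * s.im = 0 := by linarith [h1 ▸ h2]
    rcases mul_eq_zero.mp h3 with h | h
    · exact absurd h hsre.ne'
    · exact h
  have h4 : (s ^ 2).re = t := by rw [ht]; simp
  have h5 : (s ^ 2).re = s.re ^ 2 - s.im ^ 2 := by
    simp [pow_two, Complex.mul_re]
  nlinarith [hsre, him, h4, h5, htle]
end

section
/- Let ε > 0, δx > 0, δt > 0, let z be a complex number with |z| > 1, and set s = s(z) = (2/δt)·(z − 1)/(z + 1). Then the quadratic polynomial P(r) = (1 + ε s²) r² − 2(1 + s²(ε + δx²/2)) r + (1 + ε s²) has two roots r₊, r₋ (it has degree exactly 2), their product equals 1, and up to ordering they satisfy |r₊| > 1 and |r₋| < 1. -/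
/-- For `|z| > 1`, the quadratic `P(r) = (1 + εs²) r² − 2(1 + s²(ε + δx²/2)) r + (1 + εs²)`
with `s = s(z)` has degree exactly two (nonvanishing leading coefficient) and two roots
`r₊, r₋` with product `1` satisfying `|r₊| > 1 > |r₋|`. -/
theorem stmt_9 (ε δx δt : ℝ) (hε : 0 < ε) (hδx : 0 < δx) (hδt : 0 < δt)
    (z : ℂ) (hz : 1 < ‖z‖) :
    1 + (ε : ℂ) * (sCN δt z) ^ 2 ≠ 0 ∧
    ∃ rp rm : ℂ,
      (∀ r : ℂ,
        (1 + (ε : ℂ) * (sCN δt z) ^ 2) * r ^ 2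
          - 2 * (1 + (sCN δt z) ^ 2 * ((ε : ℂ) + (δx : ℂ) ^ 2 / 2)) * r
          + (1 + (ε : ℂ) * (sCN δt z) ^ 2)
        = (1 + (ε : ℂ) * (sCN δt z) ^ 2) * (r - rp) * (r - rm)) ∧
      rp * rm = 1 ∧ 1 < ‖rp‖ ∧ ‖rm‖ < 1 := by
  set s := sCN δt z with hs
  -- z + 1 ≠ 0
  have hz1 : z + 1 ≠ 0 := by
    intro h
    have : z = -1 := by linear_combination h
    rw [this] at hz
    simp at hz
  -- real part of s is positive
  have hsre : 0 < s.re := by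
    have hns : 0 < Complex.normSq (z + 1) := Complex.normSq_pos.mpr hz1
    have hnz : 1 < Complex.normSq z := by
      have := Complex.sq_norm z
      nlinarith [norm_nonneg z]
    have hform : s = ((2 / δt : ℝ) : ℂ) * ((z - 1) / (z + 1)) := by
      rw [hs, sCN]
      push_cast
      ring
    rw [hform, Complex.re_ofReal_mul]
    have hre : ((z - 1) / (z + 1)).re
        = (Complex.normSq z - 1) / Complex.normSq (z + 1) := by
      rw [Complex.div_re]
      simp [Complex.normSq_apply]
      ring
    rw [hre]
    exact mul_pos (by positivity) (div_pos (by linarith) hns)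
  set w : ℂ := s ^ 2 with hwdef
  -- if w is real then it is positive
  have hw : w.im = 0 → 0 < w.re := by
    intro him
    have h1 : w.im = 2 * (s.re * s.im) := by
      rw [hwdef, pow_two, Complex.mul_im]; ring
    have h2 : w.re = s.re ^ 2 - s.im ^ 2 := by
      rw [hwdef, pow_two, Complex.mul_re]; ring
    have hsim : s.im = 0 := by
      rw [h1] at him
      rcases mul_eq_zero.mp (by linarith : s.re * s.im = 0) with h | h
      · linarith
      · exact h
    rw [h2, hsim]
    nlinarith
  -- leading coefficient nonzero
  have hA : (1 : ℂ) + (ε : ℂ) * w ≠ 0 := by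
    intro h
    have him : (((1 : ℂ) + (ε : ℂ) * w)).im = 0 := by rw [h]; simp
    have hre : (((1 : ℂ) + (ε : ℂ) * w)).re = 0 := by rw [h]; simp
    simp [Complex.add_im, Complex.add_re, Complex.mul_im, Complex.mul_re] at him hre
    have hwim : w.im = 0 := by
      rcases him with h' | h'
      · exact absurd h' (ne_of_gt hε)
      · exact h'
    have := hw hwim
    nlinarith
  obtain ⟨b, hAb⟩ : ∃ b : ℂ, (1 + (ε : ℂ) * w) * b = 1 + w * ((ε : ℂ) + (δx : ℂ) ^ 2 / 2) :=
    ⟨(1 + w * ((ε : ℂ) + (δx : ℂ) ^ 2 / 2)) / (1 + (ε : ℂ) * w), by field_simp⟩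
  obtain ⟨d, hd⟩ : ∃ d : ℂ, d ^ 2 = b ^ 2 - 1 :=
    IsAlgClosed.exists_pow_nat_eq (b ^ 2 - 1) zero_lt_two
  -- no root of r² - 2br + 1 lies on the unit circle
  have key : ∀ ρ : ℂ, ρ ^ 2 - 2 * b * ρ + 1 = 0 → ‖ρ‖ ≠ 1 := by
    intro ρ hρ habs1
    have hns : Complex.normSq ρ = 1 := by
      rw [← Complex.sq_norm, habs1]; norm_num
    have h1 : ρ * (starRingEnd ℂ) ρ = 1 := by
      rw [Complex.mul_conj, hns]; norm_num
    have hadd : ρ + (starRingEnd ℂ) ρ = ((2 * ρ.re : ℝ) : ℂ) := Complex.add_conj ρ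
    have hb : b = ((ρ.re : ℝ) : ℂ) := by
      push_cast at hadd
      linear_combination (-(1/2) * (starRingEnd ℂ) ρ) * hρ + ((ρ - 2*b)/2) * h1
        + (1/2) * hadd
    set β : ℝ := ρ.re with hβ
    have hβ1 : β ≤ 1 := by
      have := Complex.abs_re_le_norm ρ
      rw [habs1] at this
      exact (abs_le.mp this).2
    set D : ℝ := ε * (1 - β) + δx ^ 2 / 2 with hDdef
    have hD : 0 < D := by
      have : 0 ≤ ε * (1 - β) := mul_nonneg hε.le (by linarith)
      positivity
    have heq : w * ((D : ℝ) : ℂ) = (((β - 1 : ℝ)) : ℂ) := by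
      rw [hb] at hAb
      push_cast [hDdef]
      linear_combination -hAb
    have him : w.im * D = 0 := by
      have := congrArg Complex.im heq
      simpa [Complex.mul_im] using this
    have hwim : w.im = 0 := by
      rcases mul_eq_zero.mp him with h | h
      · exact h
      · exact absurd h (ne_of_gt hD)
    have hwre : 0 < w.re := hw hwim
    have hre : w.re * D = β - 1 := by
      have := congrArg Complex.re heq
      simpa [Complex.mul_re, hwim] using this
    nlinarith
  refine ⟨hA, ?_⟩
  have hroot1 : (b + d) ^ 2 - 2 * b * (b + d) + 1 = 0 := by linear_combination hd
  have hroot2 : (b - d) ^ 2 - 2 * b * (b - d) + 1 = 0 := by linear_combination hd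
  have hprod : (b + d) * (b - d) = 1 := by linear_combination -hd
  have habs : ‖b + d‖ * ‖b - d‖ = 1 := by
    rw [← norm_mul, hprod, norm_one]
  have hfact : ∀ r : ℂ,
      (1 + (ε : ℂ) * (sCN δt z) ^ 2) * r ^ 2
        - 2 * (1 + (sCN δt z) ^ 2 * ((ε : ℂ) + (δx : ℂ) ^ 2 / 2)) * r
        + (1 + (ε : ℂ) * (sCN δt z) ^ 2)
      = (1 + (ε : ℂ) * (sCN δt z) ^ 2) * (r - (b + d)) * (r - (b - d)) := by
    intro r
    rw [← hs]
    linear_combination (2 * r) * hAb + (1 + (ε : ℂ) * w) * hd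
  have hne1 : ‖b + d‖ ≠ 1 := key _ hroot1
  have hne2 : ‖b - d‖ ≠ 1 := key _ hroot2
  have hnn1 : 0 ≤ ‖b + d‖ := norm_nonneg _
  have hnn2 : 0 ≤ ‖b - d‖ := norm_nonneg _
  rcases lt_trichotomy (‖b + d‖) 1 with hlt | heq1 | hgt
  · refine ⟨b - d, b + d, ?_, by linear_combination hprod, ?_, hlt⟩
    · intro r
      rw [hfact r]; ring
    · nlinarith
  · exact absurd heq1 hne1
  · refine ⟨b + d, b - d, hfact, hprod, hgt, ?_⟩
    nlinarith
end

section
/- Let ε > 0, δx > 0, δt > 0, let z be a complex number with |z| > 1, and set s = s(z) = (2/δt)·(z − 1)/(z + 1). Then the quartic polynomial P(r) = r⁴ + 4εs² r³ − (2 + 4s²(δx² + 2ε)) r² + 4εs² r + 1 has, counted with multiplicity, exactly two roots in the open unit disk {r : |r| < 1} and exactly two roots in {r : |r| > 1}; moreover the product of its four roots equals 1. -/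
open Polynomial

lemma sCN_re_pos (δt : ℝ) (hδt : 0 < δt) (z : ℂ) (hz : 1 < ‖z‖) :
    0 < (sCN δt z).re := by
  have hz1 : z + 1 ≠ 0 := by
    intro h
    have : z = -1 := by linear_combination h
    rw [this] at hz; simp at hz
  have hrw : sCN δt z = ((2 / δt : ℝ) : ℂ) * ((z - 1) / (z + 1)) := by
    unfold sCN; push_cast; ring
  have hre : ((z - 1) / (z + 1)).re = (Complex.normSq z - 1) / Complex.normSq (z + 1) := by
    rw [Complex.div_re]
    simp only [Complex.sub_re, Complex.sub_im, Complex.add_re, Complex.add_im,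
      Complex.one_re, Complex.one_im, Complex.normSq_apply]
    ring
  have h1 : 1 < Complex.normSq z := by
    have := Complex.sq_norm z
    nlinarith
  have h2 : 0 < Complex.normSq (z + 1) := Complex.normSq_pos.2 hz1
  rw [hrw, Complex.re_ofReal_mul, hre]
  have h3 : 0 < 2 / δt := by positivity
  have h4 : 0 < (Complex.normSq z - 1) / Complex.normSq (z + 1) := by
    apply div_pos <;> linarith
  positivity

lemma no_unit_root (ε δx : ℝ) (hε : 0 < ε) (hδx : 0 < δx) (s : ℂ) (hsre : 0 < s.re)
    (r : ℂ) (habs : ‖r‖ = 1)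
    (hroot : r ^ 4 + (4 * (ε : ℂ) * s ^ 2) * r ^ 3
      - (2 + 4 * s ^ 2 * ((δx : ℂ) ^ 2 + 2 * (ε : ℂ))) * r ^ 2
      + (4 * (ε : ℂ) * s ^ 2) * r + 1 = 0) : False := by
  have hr0 : r ≠ 0 := by intro h; rw [h] at habs; simp at habs
  set t : ℝ := 2 * r.re with htdef
  have hconj : (starRingEnd ℂ) r = (t:ℂ) - r := by
    apply Complex.ext
    · simp [htdef]; ring
    · simp [htdef]
  have hinv : r⁻¹ = (t:ℂ) - r := by
    rw [← hconj, Complex.inv_def, Complex.normSq_eq_norm_sq, habs]; simp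
  have ht : (t:ℂ) = r + r⁻¹ := by rw [hinv]; ring
  have ht2 : t^2 ≤ 4 := by
    have h := Complex.abs_re_le_norm r
    rw [habs] at h
    have := abs_le.mp h
    rw [htdef]; nlinarith
  have key : s^2 * ((4:ℂ)*((ε:ℂ)*(t:ℂ) - (δx:ℂ)^2 - 2*(ε:ℂ))) = ((4 - t^2 : ℝ) : ℂ) := by
    push_cast
    rw [ht]
    field_simp
    linear_combination hroot
  set d : ℝ := 4*(ε*t - δx^2 - 2*ε) with hddef
  have hd : d < 0 := by
    have h2 : t ≤ 2 := by nlinarith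
    rw [hddef]; nlinarith
  have key2 : s^2 * ((d:ℝ):ℂ) = (((4 - t^2 : ℝ)):ℂ) := by
    have key' := key
    push_cast at key'
    rw [hddef]; push_cast; linear_combination key'
  have him : (s^2).im * d = 0 := by
    have h := congrArg Complex.im key2
    simpa [Complex.mul_im, ← Complex.ofReal_pow] using h
  have hsim : s.im = 0 := by
    have h1 : (s^2).im = 2 * s.re * s.im := by rw [sq, Complex.mul_im]; ring
    rw [h1] at him
    rcases mul_eq_zero.mp him with h | h
    · nlinarith
    · exact absurd h (ne_of_lt hd)
  have hre : (s^2).re * d = 4 - t^2 := by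
    have h := congrArg Complex.re key2
    simpa [Complex.mul_re, ← Complex.ofReal_pow] using h
  have h1 : (s^2).re = s.re^2 := by rw [sq, Complex.mul_re, hsim]; ring
  have h2 : 0 < s.re^2 := by positivity
  nlinarith

open scoped Classical in
/-- For `|z| > 1`, the quartic `r⁴ + 4εs² r³ − (2 + 4s²(δx² + 2ε)) r² + 4εs² r + 1`
with `s = s(z)` has (with multiplicity) exactly two roots in the open unit disk and
exactly two roots outside the closed unit disk, and the product of its roots is `1`. -/
theorem stmt_12 (ε δx δt : ℝ) (hε : 0 < ε) (hδx : 0 < δx) (hδt : 0 < δt)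
    (z : ℂ) (hz : 1 < ‖z‖) :
    Multiset.card
      ((X ^ 4 + C (4 * (ε : ℂ) * (sCN δt z) ^ 2) * X ^ 3
        - C (2 + 4 * (sCN δt z) ^ 2 * ((δx : ℂ) ^ 2 + 2 * (ε : ℂ))) * X ^ 2
        + C (4 * (ε : ℂ) * (sCN δt z) ^ 2) * X + C 1 : Polynomial ℂ).roots.filter
          (fun r => ‖r‖ < 1)) = 2 ∧
    Multiset.card
      ((X ^ 4 + C (4 * (ε : ℂ) * (sCN δt z) ^ 2) * X ^ 3
        - C (2 + 4 * (sCN δt z) ^ 2 * ((δx : ℂ) ^ 2 + 2 * (ε : ℂ))) * X ^ 2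
        + C (4 * (ε : ℂ) * (sCN δt z) ^ 2) * X + C 1 : Polynomial ℂ).roots.filter
          (fun r => 1 < ‖r‖)) = 2 ∧
    (X ^ 4 + C (4 * (ε : ℂ) * (sCN δt z) ^ 2) * X ^ 3
        - C (2 + 4 * (sCN δt z) ^ 2 * ((δx : ℂ) ^ 2 + 2 * (ε : ℂ))) * X ^ 2
        + C (4 * (ε : ℂ) * (sCN δt z) ^ 2) * X + C 1 : Polynomial ℂ).roots.prod = 1 := by
  have hsre : 0 < (sCN δt z).re := sCN_re_pos δt hδt z hz
  set s : ℂ := sCN δt z with hs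
  set a : ℂ := 4 * (ε:ℂ) * s^2 with ha
  set b : ℂ := 2 + 4 * s^2 * ((δx:ℂ)^2 + 2*(ε:ℂ)) with hb
  set P : ℂ[X] := X^4 + C a * X^3 - C b * X^2 + C a * X + C 1 with hP
  have hm : P.Monic := by rw [hP]; monicity!
  have hdeg : P.natDegree = 4 := by rw [hP]; compute_degree!
  have hP0 : P.eval 0 = 1 := by rw [hP]; simp
  have hPne : P ≠ 0 := hm.ne_zero
  have hsplit : Splits P := IsAlgClosed.splits P
  have hcard : Multiset.card P.roots = 4 := by
    have h := hsplit.natDegree_eq_card_roots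
    rw [hdeg] at h
    exact h.symm
  have hfact : P = (P.roots.map fun r => X - C r).prod :=
    hsplit.eq_prod_roots_of_monic hm
  have hne0 : ∀ r ∈ P.roots, r ≠ 0 := by
    intro r hr h0
    have := isRoot_of_mem_roots hr
    rw [h0] at this
    rw [Polynomial.IsRoot] at this
    rw [this] at hP0
    exact one_ne_zero hP0.symm
  -- product of roots is 1
  have hprod : P.roots.prod = 1 := by
    have h := congrArg (eval 0) hfact
    rw [hP0, eval_multiset_prod, Multiset.map_map] at h
    simp only [Function.comp_def, eval_sub, eval_X, eval_C, zero_sub] at h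
    have h2 : (P.roots.map fun r => -r).prod = (-1)^(Multiset.card P.roots) * P.roots.prod := by
      have : (P.roots.map fun r => -r) = (P.roots.map fun r => (-1) * r) := by
        apply Multiset.map_congr rfl; intro x _; ring
      rw [this, Multiset.prod_map_mul, Multiset.map_const', Multiset.prod_replicate,
        Multiset.map_id']
    rw [h2, hcard] at h
    have h3 := h.symm
    rw [show ((-1:ℂ))^4 = 1 by norm_num, one_mul] at h3
    exact h3
  -- no roots on the unit circle
  have hcirc : ∀ r ∈ P.roots, ‖r‖ ≠ 1 := by
    intro r hr h1
    have hev : P.eval r = 0 := isRoot_of_mem_roots hr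
    rw [hP] at hev
    simp only [eval_add, eval_sub, eval_mul, eval_pow, eval_X, eval_C] at hev
    exact no_unit_root ε δx hε hδx s hsre r h1 (by rw [ha, hb] at hev; linear_combination hev)
  -- the reciprocal-roots polynomial equals P
  have hQ : (((P.roots.map fun r => r⁻¹)).map fun x => X - C x).prod = P := by
    apply eq_of_infinite_eval_eq
    have hsub : {x : ℂ | x ≠ 0} ⊆
        {x | eval x (((P.roots.map fun r => r⁻¹)).map fun y => X - C y).prod = eval x P} := by
      intro w hw
      have hw0 : (w : ℂ) ≠ 0 := hw
      have e1 : eval w (((P.roots.map fun r => r⁻¹)).map fun y => X - C y).prod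
          = (P.roots.map fun r => w - r⁻¹).prod := by
        rw [eval_multiset_prod, Multiset.map_map, Multiset.map_map]
        simp [Function.comp_def]
      have e2 : (P.roots.map fun r => w - r⁻¹).prod
          = (P.roots.map fun r => r⁻¹ * (r * w - 1)).prod := by
        apply congrArg Multiset.prod
        apply Multiset.map_congr rfl
        intro x hx
        field_simp [hne0 x hx]
      have e3 : (P.roots.map fun r => r⁻¹ * (r * w - 1)).prod
          = (P.roots.map fun r => r⁻¹).prod * (P.roots.map fun r => r * w - 1).prod :=
        Multiset.prod_map_mul
      have e4 : (P.roots.map fun r => r⁻¹).prod = 1 := by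
        rw [Multiset.prod_map_inv]
        simp [Multiset.map_id', hprod]
      have e5 : (P.roots.map fun r => r * w - 1).prod
          = (P.roots.map fun r => (-w) * (w⁻¹ - r)).prod := by
        apply congrArg Multiset.prod
        apply Multiset.map_congr rfl
        intro x _
        field_simp
        ring
      have e6 : (P.roots.map fun r => (-w) * (w⁻¹ - r)).prod
          = (-w)^4 * (P.roots.map fun r => w⁻¹ - r).prod := by
        rw [Multiset.prod_map_mul, Multiset.map_const', Multiset.prod_replicate, hcard]
      have e7 : (P.roots.map fun r => w⁻¹ - r).prod = eval w⁻¹ P := by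
        conv_rhs => rw [hfact]
        rw [eval_multiset_prod, Multiset.map_map]
        simp [Function.comp_def]
      have hwinv : w * w⁻¹ = 1 := mul_inv_cancel₀ hw0
      have e8 : (-w)^4 * eval w⁻¹ P = eval w P := by
        rw [hP]
        simp only [eval_add, eval_sub, eval_mul, eval_pow, eval_X, eval_C]
        linear_combination ((w^3*w⁻¹^3 + w^2*w⁻¹^2 + w*w⁻¹ + 1) + a*w*(w^2*w⁻¹^2 + w*w⁻¹ + 1)
          - b*w^2*(w*w⁻¹+1) + a*w^3) * hwinv
      show eval w (((P.roots.map fun r => r⁻¹)).map fun y => X - C y).prod = eval w P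
      rw [e1, e2, e3, e4, e5, e6, e7, e8, one_mul]
    apply Set.Infinite.mono hsub
    apply Set.infinite_of_finite_compl
    apply Set.Finite.subset (Set.finite_singleton 0)
    intro x hx
    simp only [Set.mem_compl_iff, Set.mem_setOf_eq, not_not] at hx
    simp [hx]
  have hswap : P.roots.map (fun r => r⁻¹) = P.roots := by
    have := congrArg Polynomial.roots hQ
    rwa [roots_multiset_prod_X_sub_C] at this
  -- counting
  have hcount : Multiset.card (P.roots.filter fun r => ‖r‖ < 1)
      = Multiset.card (P.roots.filter fun r => 1 < ‖r‖) := by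
    conv_lhs => rw [← hswap]
    rw [Multiset.filter_map, Multiset.card_map]
    apply congrArg
    apply Multiset.filter_congr
    intro x hx
    have hx0 : x ≠ 0 := hne0 x hx
    have hxa : 0 < ‖x‖ := by
      simpa using hx0
    simp only [Function.comp_apply, map_inv₀, norm_inv]
    exact inv_lt_one₀ hxa
  have htot : Multiset.card (P.roots.filter fun r => ‖r‖ < 1)
      + Multiset.card (P.roots.filter fun r => 1 < ‖r‖) = 4 := by
    have h := congrArg Multiset.card (Multiset.filter_add_not (fun r => ‖r‖ < 1) P.roots)
    rw [Multiset.card_add, hcard] at h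
    have h2 : (P.roots.filter fun r => ¬ ‖r‖ < 1)
        = (P.roots.filter fun r => 1 < ‖r‖) := by
      apply Multiset.filter_congr
      intro x hx
      have := hcirc x hx
      constructor
      · intro hnl; rcases lt_trichotomy (‖x‖) 1 with h | h | h
        · exact absurd h hnl
        · exact absurd h this
        · exact h
      · intro hgt; exact not_lt.2 (le_of_lt hgt)
    rw [h2] at h
    exact h
  refine ⟨?_, ?_, hprod⟩
  · omega
  · omega
end

section
/- Let ε > 0 and let s be a fixed complex number with Re(s) > 0. For δx > 0 set P_{δx}(r) = r⁴ + 4εs² r³ − (2 + 4s²(δx² + 2ε)) r² + 4εs² r + 1. Then there exist constants C > 0 and δ₀ > 0 such that for every δx ∈ (0, δ₀), P_{δx} has roots r₁, r₂, r₃, r₄ satisfying: |r₂ − (1 + s δx / √(1 + εs²))| ≤ C δx², |r₃ − (1 − s δx / √(1 + εs²))| ≤ C δx², |r₁ − ( −(1 + 2εs²) − 2√(εs²(1 + εs²)) )| ≤ C δx², and |r₄ − ( −(1 + 2εs²) + 2√(εs²(1 + εs²)) )| ≤ C δx², where √ denotes the principal branch of the complex square root. -/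
set_option maxHeartbeats 1000000

lemma csq_half (z : ℂ) : (z ^ (1/2 : ℂ)) ^ 2 = z := by
  by_cases hz : z = 0
  · rw [hz, Complex.zero_cpow (by norm_num : (1/2 : ℂ) ≠ 0)]
    norm_num
  · rw [sq, ← Complex.cpow_add _ _ hz]
    norm_num

lemma re_half_nonneg (z : ℂ) : 0 ≤ (z ^ (1/2 : ℂ)).re := by
  rw [(by norm_num : (1/2 : ℂ) = 2⁻¹), Complex.cpow_inv_two_re]
  exact Real.sqrt_nonneg _

lemma re_half_pos {z : ℂ} (h : z.im ≠ 0 ∨ 0 < z.re) : 0 < (z ^ (1/2 : ℂ)).re := by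
  rw [(by norm_num : (1/2 : ℂ) = 2⁻¹), Complex.cpow_inv_two_re]
  apply Real.sqrt_pos.2
  have h1 : z.re ≤ norm z := Complex.re_le_norm z
  have h2 : |z.re| ≤ norm z := Complex.abs_re_le_norm z
  rcases h with h | h
  · have h3 : |z.re| ^ 2 < (norm z) ^ 2 := by
      rw [sq_abs, Complex.sq_norm, Complex.normSq_apply]
      nlinarith [mul_self_pos.2 h]
    have h4 : |z.re| < norm z :=
      lt_of_pow_lt_pow_left₀ 2 (norm_nonneg _) h3
    have := neg_abs_le z.re
    linarith
  · have : 0 ≤ norm z := norm_nonneg _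
    positivity

lemma sqrt_diff_le (u v : ℂ) (hv : 0 < (v ^ (1/2 : ℂ)).re) :
    norm (u ^ (1/2 : ℂ) - v ^ (1/2 : ℂ))
      ≤ norm (u - v) / (v ^ (1/2 : ℂ)).re := by
  set p := u ^ (1/2 : ℂ) with hp
  set q := v ^ (1/2 : ℂ) with hq
  have hpq : (p - q) * (p + q) = u - v := by
    have h1 := csq_half u
    have h2 := csq_half v
    rw [← hp] at h1; rw [← hq] at h2
    linear_combination h1 - h2
  have h1 : q.re ≤ norm (p + q) := by
    have := re_half_nonneg u
    rw [← hp] at this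
    calc q.re ≤ p.re + q.re := by linarith
      _ = (p + q).re := by simp
      _ ≤ norm (p + q) := Complex.re_le_norm _
  rw [le_div_iff₀ hv]
  calc norm (p - q) * q.re ≤ norm (p - q) * norm (p + q) := by
        apply mul_le_mul_of_nonneg_left h1 (norm_nonneg _)
    _ = norm (u - v) := by rw [← norm_mul, hpq]

lemma sqrt_one_add (u : ℂ) : norm ((1 + u) ^ (1/2 : ℂ) - 1) ≤ norm u := by
  have h := sqrt_diff_le (1 + u) 1 (by rw [Complex.one_cpow]; norm_num)
  rw [Complex.one_cpow] at h
  simpa using h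

/-- Asymptotic expansion, as `δx → 0`, of the four roots of the collocated-grid
characteristic quartic `P_{δx}(r) = r⁴ + 4εs² r³ − (2 + 4s²(δx² + 2ε)) r² + 4εs² r + 1`
for a fixed `s` with `Re(s) > 0`. -/
theorem stmt_13 (ε : ℝ) (hε : 0 < ε) (s : ℂ) (hs : 0 < s.re) :
    ∃ C > (0 : ℝ), ∃ δ₀ > (0 : ℝ), ∀ δx : ℝ, 0 < δx → δx < δ₀ →
      ∃ r1 r2 r3 r4 : ℂ,
        (∀ r : ℂ,
          r ^ 4 + 4 * (ε : ℂ) * s ^ 2 * r ^ 3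
            - (2 + 4 * s ^ 2 * ((δx : ℂ) ^ 2 + 2 * (ε : ℂ))) * r ^ 2
            + 4 * (ε : ℂ) * s ^ 2 * r + 1
          = (r - r1) * (r - r2) * (r - r3) * (r - r4)) ∧
        norm (r2 - (1 + s * (δx : ℂ) / (1 + (ε : ℂ) * s ^ 2) ^ (1 / 2 : ℂ)))
          ≤ C * δx ^ 2 ∧
        norm (r3 - (1 - s * (δx : ℂ) / (1 + (ε : ℂ) * s ^ 2) ^ (1 / 2 : ℂ)))
          ≤ C * δx ^ 2 ∧
        norm (r1 - (-(1 + 2 * (ε : ℂ) * s ^ 2)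
            - 2 * ((ε : ℂ) * s ^ 2 * (1 + (ε : ℂ) * s ^ 2)) ^ (1 / 2 : ℂ)))
          ≤ C * δx ^ 2 ∧
        norm (r4 - (-(1 + 2 * (ε : ℂ) * s ^ 2)
            + 2 * ((ε : ℂ) * s ^ 2 * (1 + (ε : ℂ) * s ^ 2)) ^ (1 / 2 : ℂ)))
          ≤ C * δx ^ 2 := by
  have hs0 : s ≠ 0 := fun h => by simp [h] at hs
  set a : ℂ := (ε : ℂ) * s ^ 2 with ha_def
  set A : ℂ := 1 + a with hA_def
  clear_value a A
  have hare : a.re = ε * (s.re * s.re - s.im * s.im) := by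
    simp [ha_def, sq, Complex.mul_re, Complex.mul_im]
  have haim : a.im = ε * (s.re * s.im + s.im * s.re) := by
    simp [ha_def, sq, Complex.mul_re, Complex.mul_im]
  have ha_slit : a.im ≠ 0 ∨ 0 < a.re := by
    by_cases him : s.im = 0
    · right; rw [hare, him]; nlinarith [mul_pos hs hs]
    · left; rw [haim]
      intro hcon
      rcases mul_eq_zero.1 hcon with h | h
      · exact absurd h (ne_of_gt hε)
      · have h1 : s.re * s.im ≠ 0 := mul_ne_zero hs.ne' him
        apply h1; linarith
  have ha0 : a ≠ 0 := by
    intro h; rcases ha_slit with h' | h' <;> rw [h] at h' <;> simp at h'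
  have hA_slit : A.im ≠ 0 ∨ 0 < A.re := by
    rcases ha_slit with h | h
    · left; rw [hA_def]; simpa using h
    · right; rw [hA_def]; simp; linarith
  have hA0 : A ≠ 0 := by
    intro h; rcases hA_slit with h' | h' <;> rw [h] at h' <;> simp at h'
  have hAinv_slit : (A⁻¹).im ≠ 0 ∨ 0 < (A⁻¹).re := by
    have hns : 0 < Complex.normSq A := Complex.normSq_pos.2 hA0
    rcases hA_slit with h | h
    · left; rw [Complex.inv_im]
      simp only [ne_eq, div_eq_zero_iff, neg_eq_zero]
      push_neg
      exact ⟨h, hns.ne'⟩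
    · right; rw [Complex.inv_re]; exact div_pos h hns
  have hAarg : A.arg ≠ Real.pi := by
    rw [ne_eq, Complex.arg_eq_pi_iff]
    rcases hA_slit with h | h
    · intro hc; exact h hc.2
    · intro hc; linarith [hc.1]
  set M : ℝ := norm A with hM_def
  have hM : 0 < M := norm_pos_iff.2 hA0
  have hm : 0 < ((A⁻¹ : ℂ) ^ (1/2 : ℂ)).re := re_half_pos hAinv_slit
  set mre : ℝ := ((A⁻¹ : ℂ) ^ (1/2 : ℂ)).re with hmre_def
  set Sb : ℝ := norm s with hSb_def
  have hSb : 0 < Sb := norm_pos_iff.2 hs0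
  set aB : ℝ := norm a with haB_def
  have haB : 0 < aB := norm_pos_iff.2 ha0
  set q0 : ℂ := (a * A) ^ (1/2 : ℂ) with hq0_def
  set C1 : ℝ := Sb ^ 2 / M with hC1_def
  set C2 : ℝ := aB * Sb ^ 2 / (M ^ 3 * mre) with hC2_def
  set C3 : ℝ := 2 * norm q0 * (Sb ^ 2 * (3 * M + 2 * aB) / (4 * aB * M ^ 2))
    with hC3_def
  clear_value M mre Sb aB q0 C1 C2 C3
  have hC1 : 0 < C1 := by rw [hC1_def]; exact div_pos (pow_pos hSb 2) hM
  have hC2 : 0 < C2 := by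
    rw [hC2_def]; exact div_pos (mul_pos haB (pow_pos hSb 2)) (mul_pos (pow_pos hM 3) hm)
  have hC3 : 0 ≤ C3 := by
    rw [hC3_def]
    apply mul_nonneg (mul_nonneg (by norm_num) (norm_nonneg _))
    apply le_of_lt
    apply div_pos (mul_pos (pow_pos hSb 2) (by nlinarith)) (by positivity)
  refine ⟨C1 + Sb * C2 + C3 + 1, by nlinarith [mul_pos hSb hC2], min 1 (M / Sb),
    lt_min one_pos (div_pos hM hSb), ?_⟩
  intro δx hδ0 hδlt
  have hδ1 : δx ≤ 1 := le_of_lt (lt_of_lt_of_le hδlt (min_le_left _ _))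
  have hδM : δx * Sb ≤ M := by
    have h := lt_of_lt_of_le hδlt (min_le_right _ _)
    rw [lt_div_iff₀ hSb] at h; linarith
  have hkey : Sb ^ 2 * δx ^ 2 ≤ M ^ 2 := by
    have h := mul_le_mul hδM hδM (by positivity) hM.le
    nlinarith [h]
  set dc : ℂ := (δx : ℂ) with hdc_def
  have hdcabs : norm dc = δx := by
    rw [hdc_def, Complex.norm_real, Real.norm_eq_abs, abs_of_pos hδ0]
  set uu : ℂ := s ^ 2 * dc ^ 2 / A ^ 2 with huu_def
  set Dt : ℂ := A * ((1 + uu) ^ (1/2 : ℂ)) with hDt_def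
  clear_value dc uu Dt
  have hD2 : Dt ^ 2 = A ^ 2 + s ^ 2 * dc ^ 2 := by
    rw [hDt_def, mul_pow, csq_half, huu_def]
    field_simp
  have huuabs : norm uu = Sb ^ 2 * δx ^ 2 / M ^ 2 := by
    rw [huu_def, norm_div, norm_mul, norm_pow, norm_pow, norm_pow, hdcabs, hSb_def, hM_def]
  have E1 : norm (Dt - A) ≤ C1 * δx ^ 2 := by
    have h : Dt - A = A * ((1 + uu) ^ (1/2 : ℂ) - 1) := by rw [hDt_def]; ring
    rw [h, norm_mul, ← hM_def]
    calc M * norm ((1 + uu) ^ (1/2 : ℂ) - 1)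
        ≤ M * norm uu := mul_le_mul_of_nonneg_left (sqrt_one_add uu) hM.le
      _ = C1 * δx ^ 2 := by rw [huuabs, hC1_def]; field_simp
  have E1' : norm (Dt - A) ≤ M := by
    refine E1.trans ?_
    rw [hC1_def, div_mul_eq_mul_div, div_le_iff₀ hM]
    nlinarith
  have hADge : M ≤ norm (A + Dt) := by
    have htri := norm_add_le (A + Dt) (A - Dt)
    have he : (A + Dt) + (A - Dt) = 2 * A := by ring
    rw [he, norm_mul, Complex.norm_two] at htri
    have hsub : norm (A - Dt) = norm (Dt - A) := by
      rw [norm_sub_rev]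
    rw [hsub] at htri
    linarith
  have hAD0 : A + Dt ≠ 0 := by
    intro h; rw [h] at hADge; simp at hADge; linarith
  set γt : ℂ := (1 - 2 * a / (A + Dt)) ^ (1/2 : ℂ) with hγ_def
  set g0 : ℂ := (A⁻¹ : ℂ) ^ (1/2 : ℂ) with hg0_def
  clear_value γt g0
  have hdel : (1 - 2 * a / (A + Dt)) - A⁻¹ = a * (Dt - A) / (A * (A + Dt)) := by
    have h1 : A⁻¹ = 1 - a / A := by
      field_simp
      linear_combination -hA_def
    rw [h1]
    field_simp
    ring
  have E2 : norm (γt - g0) ≤ C2 * δx ^ 2 := by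
    have hm' : 0 < ((A⁻¹ : ℂ) ^ (1/2 : ℂ)).re := by rw [← hg0_def, ← hmre_def]; exact hm
    have h := sqrt_diff_le (1 - 2 * a / (A + Dt)) A⁻¹ hm'
    rw [← hg0_def, ← hmre_def, ← hγ_def] at h
    have hnum : norm ((1 - 2 * a / (A + Dt)) - A⁻¹)
        ≤ aB * (C1 * δx ^ 2) / (M * M) := by
      rw [hdel, norm_div, norm_mul, norm_mul, ← haB_def, ← hM_def]
      exact div_le_div₀ (by positivity)
        (mul_le_mul_of_nonneg_left E1 haB.le) (by positivity)
        (mul_le_mul_of_nonneg_left hADge hM.le)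
    refine h.trans ?_
    refine ((div_le_div_iff_of_pos_right hm).2 hnum).trans ?_
    apply le_of_eq
    rw [hC2_def, hC1_def]
    field_simp
  have h4aA0 : (4 * a * A : ℂ) ≠ 0 := by simp [ha0, hA0]
  set h1c : ℂ := ((a + Dt) ^ 2 - 1) / (4 * a * A) with hh_def
  set βt : ℂ := 2 * q0 * (h1c ^ (1/2 : ℂ)) with hβ_def
  clear_value h1c βt
  have hq0sq : q0 ^ 2 = a * A := by rw [hq0_def]; exact csq_half _
  have hβ2 : βt ^ 2 = (a + Dt) ^ 2 - 1 := by
    rw [hβ_def, mul_pow, mul_pow, hq0sq, csq_half, hh_def]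
    field_simp
    ring
  have hnum14 : (a + Dt) ^ 2 - 1 - 4 * a * A = (Dt - A) * (Dt + A + 2 * a) := by
    linear_combination (A - a + 1) * hA_def
  have hh_minus : h1c - 1 = (Dt - A) * (Dt + A + 2 * a) / (4 * a * A) := by
    rw [hh_def, div_sub_one h4aA0, hnum14]
  have habs4 : norm (4 * a * A) = 4 * aB * M := by
    rw [norm_mul, norm_mul, ← haB_def, ← hM_def]
    norm_num
  have hbnd : norm (Dt + A + 2 * a) ≤ 3 * M + 2 * aB := by
    have he : Dt + A + 2 * a = (Dt - A) + (2 * A + 2 * a) := by ring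
    rw [he]
    refine (norm_add_le _ _).trans ?_
    have h2 : norm (2 * A + 2 * a) ≤ 2 * M + 2 * aB := by
      refine (norm_add_le _ _).trans (le_of_eq ?_)
      rw [norm_mul, norm_mul, Complex.norm_two, ← hM_def, ← haB_def]
    linarith [E1']
  have hhabs : norm (h1c - 1) ≤ C1 * δx ^ 2 * (3 * M + 2 * aB) / (4 * aB * M) := by
    rw [hh_minus, norm_div, norm_mul, habs4]
    exact div_le_div₀ (by positivity)
      (mul_le_mul E1 hbnd (norm_nonneg _) (by positivity))
      (by positivity) (le_refl _)
  have E3 : norm (βt - 2 * q0) ≤ C3 * δx ^ 2 := by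
    have hfac : βt - 2 * q0 = 2 * q0 * (h1c ^ (1/2 : ℂ) - 1) := by rw [hβ_def]; ring
    rw [hfac, norm_mul, norm_mul, Complex.norm_two]
    have hs1 : norm (h1c ^ (1/2 : ℂ) - 1) ≤ norm (h1c - 1) := by
      have h := sqrt_one_add (h1c - 1)
      have e : (1 : ℂ) + (h1c - 1) = h1c := by ring
      rwa [e] at h
    calc 2 * norm q0 * norm (h1c ^ (1/2 : ℂ) - 1)
        ≤ 2 * norm q0 * (C1 * δx ^ 2 * (3 * M + 2 * aB) / (4 * aB * M)) := by
          exact mul_le_mul_of_nonneg_left (hs1.trans hhabs) (by positivity)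
      _ = C3 * δx ^ 2 := by rw [hC3_def, hC1_def]; field_simp
  have hx2 : (0 : ℝ) ≤ δx ^ 2 := by positivity
  have hSbC2 : 0 < Sb * C2 := mul_pos hSb hC2
  refine ⟨-(a + Dt) - βt, (Dt - a) + s * dc * γt, (Dt - a) - s * dc * γt,
    -(a + Dt) + βt, ?_, ?_, ?_, ?_, ?_⟩
  · intro r
    have hγsq : γt ^ 2 = 1 - 2 * a / (A + Dt) := by rw [hγ_def]; exact csq_half _
    have hγ2' : γt ^ 2 * (A + Dt) = (A + Dt) - 2 * a := by
      rw [hγsq]; field_simp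
    have key23 : ((Dt - a) ^ 2 - (s * dc * γt) ^ 2 - 1) * (A + Dt) = 0 := by
      linear_combination ((A + Dt) * (A - a + 1)) * hA_def + (A + Dt - 2 * a) * hD2
        - (s ^ 2 * dc ^ 2) * hγ2'
    have key23' : (Dt - a) ^ 2 - (s * dc * γt) ^ 2 = 1 := by
      rcases mul_eq_zero.1 key23 with h | h
      · exact sub_eq_zero.mp h
      · exact absurd h hAD0
    have key14 : (a + Dt) ^ 2 - βt ^ 2 = 1 := by rw [hβ2]; ring
    have step1 : r ^ 4 + 4 * (ε : ℂ) * s ^ 2 * r ^ 3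
        - (2 + 4 * s ^ 2 * (dc ^ 2 + 2 * (ε : ℂ))) * r ^ 2
        + 4 * (ε : ℂ) * s ^ 2 * r + 1
        = (r ^ 2 - 2 * (Dt - a) * r + 1) * (r ^ 2 + 2 * (a + Dt) * r + 1) := by
      linear_combination (4 * r ^ 2) * hD2 + (4 * r ^ 2 * (A + 1 + a)) * hA_def
        + (8 * r ^ 2 - 4 * r ^ 3 - 4 * r) * ha_def
    have step2 : r ^ 2 - 2 * (Dt - a) * r + 1
        = (r - ((Dt - a) + s * dc * γt)) * (r - ((Dt - a) - s * dc * γt)) := by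
      linear_combination -key23'
    have step3 : r ^ 2 + 2 * (a + Dt) * r + 1
        = (r - (-(a + Dt) - βt)) * (r - (-(a + Dt) + βt)) := by
      linear_combination -key14
    rw [step1, step2, step3]; ring
  · have hg0inv : s * dc / (A ^ (1/2 : ℂ)) = s * dc * g0 := by
      rw [hg0_def, Complex.inv_cpow _ _ hAarg]
      exact div_eq_mul_inv _ _
    have hrw : (Dt - a) + s * dc * γt - (1 + s * dc / (A ^ (1/2 : ℂ)))
        = (Dt - A) + s * dc * (γt - g0) := by
      rw [hg0inv, hA_def]; ring
    rw [hrw]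
    have h1 := norm_add_le (Dt - A) (s * dc * (γt - g0))
    have h2 : norm (s * dc * (γt - g0)) ≤ Sb * C2 * δx ^ 2 := by
      rw [norm_mul, norm_mul, hdcabs, ← hSb_def]
      calc Sb * δx * norm (γt - g0) ≤ Sb * δx * (C2 * δx ^ 2) := by
            exact mul_le_mul_of_nonneg_left E2 (by positivity)
        _ = Sb * C2 * δx ^ 2 * δx := by ring
        _ ≤ Sb * C2 * δx ^ 2 * 1 := by
            exact mul_le_mul_of_nonneg_left hδ1
              (mul_nonneg (mul_nonneg hSb.le hC2.le) hx2)
        _ = Sb * C2 * δx ^ 2 := by ring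
    have hexp : (C1 + Sb * C2 + C3 + 1) * δx ^ 2
        = C1 * δx ^ 2 + Sb * C2 * δx ^ 2 + C3 * δx ^ 2 + δx ^ 2 := by ring
    rw [hexp]
    linarith [E1, h1, h2, mul_nonneg hC3 hx2, hx2]
  · have hg0inv : s * dc / (A ^ (1/2 : ℂ)) = s * dc * g0 := by
      rw [hg0_def, Complex.inv_cpow _ _ hAarg]
      exact div_eq_mul_inv _ _
    have hrw : (Dt - a) - s * dc * γt - (1 - s * dc / (A ^ (1/2 : ℂ)))
        = (Dt - A) + (-(s * dc * (γt - g0))) := by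
      rw [hg0inv, hA_def]; ring
    rw [hrw]
    have h1 := norm_add_le (Dt - A) (-(s * dc * (γt - g0)))
    rw [norm_neg] at h1
    have h2 : norm (s * dc * (γt - g0)) ≤ Sb * C2 * δx ^ 2 := by
      rw [norm_mul, norm_mul, hdcabs, ← hSb_def]
      calc Sb * δx * norm (γt - g0) ≤ Sb * δx * (C2 * δx ^ 2) := by
            exact mul_le_mul_of_nonneg_left E2 (by positivity)
        _ = Sb * C2 * δx ^ 2 * δx := by ring
        _ ≤ Sb * C2 * δx ^ 2 * 1 := by
            exact mul_le_mul_of_nonneg_left hδ1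
              (mul_nonneg (mul_nonneg hSb.le hC2.le) hx2)
        _ = Sb * C2 * δx ^ 2 := by ring
    have hexp : (C1 + Sb * C2 + C3 + 1) * δx ^ 2
        = C1 * δx ^ 2 + Sb * C2 * δx ^ 2 + C3 * δx ^ 2 + δx ^ 2 := by ring
    rw [hexp]
    linarith [E1, h1, h2, mul_nonneg hC3 hx2, hx2]
  · have hrw : -(a + Dt) - βt - (-(1 + 2 * (ε : ℂ) * s ^ 2) - 2 * q0)
        = (A - Dt) + (2 * q0 - βt) := by
      rw [hA_def, ha_def]; ring
    rw [hrw]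
    have h1 := norm_add_le (A - Dt) (2 * q0 - βt)
    rw [norm_sub_rev] at h1
    have h2 : norm (2 * q0 - βt) = norm (βt - 2 * q0) := by
      rw [norm_sub_rev]
    rw [h2] at h1
    have hexp : (C1 + Sb * C2 + C3 + 1) * δx ^ 2
        = C1 * δx ^ 2 + Sb * C2 * δx ^ 2 + C3 * δx ^ 2 + δx ^ 2 := by ring
    rw [hexp]
    linarith [E1, E3, h1, mul_nonneg hSbC2.le hx2, hx2]
  · have hrw : -(a + Dt) + βt - (-(1 + 2 * (ε : ℂ) * s ^ 2) + 2 * q0)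
        = (A - Dt) + (βt - 2 * q0) := by
      rw [hA_def, ha_def]; ring
    rw [hrw]
    have h1 := norm_add_le (A - Dt) (βt - 2 * q0)
    rw [norm_sub_rev] at h1
    have hexp : (C1 + Sb * C2 + C3 + 1) * δx ^ 2
        = C1 * δx ^ 2 + Sb * C2 * δx ^ 2 + C3 * δx ^ 2 + δx ^ 2 := by ring
    rw [hexp]
    linarith [E1, E3, h1, mul_nonneg hSbC2.le hx2, hx2]
end
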